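/- Let E be a real inner product space and N ≥ 1. For each i = 1,…,N let f_i : E → ℝ be differentiable with L_i-Lipschitz gradient and let ρ_i ≥ L_i be positive. Suppose the dual variables satisfy Y_i⁺ = −∇f_i(U_i⁺) for all i. Then the augmented Lagrangian is bounded below by the global objective evaluated at the consensus point: 𝓛({U_i⁺}, Z⁺, {Y_i⁺}) ≥ Σ_{i=1}^N f_i(Z⁺). -/

import Mathlib

open scoped RealInnerProductSpace

/-- Descent lemma for a function with Lipschitz-continuous gradient. -/
lemma descent_lemma {E : Type*} [NormedAddCommGroup E] [InnerProductSpace ℝ E] [CompleteSpace E]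
    (f : E → ℝ) (f' : E → E) (L : ℝ) (hL : 0 ≤ L)
    (hdiff : ∀ x, HasGradientAt f (f' x) x)
    (hlip : ∀ x y, ‖f' x - f' y‖ ≤ L * ‖x - y‖)
    (x y : E) : f y ≤ f x + ⟪f' x, y - x⟫ + L / 2 * ‖y - x‖ ^ 2 := by
  set v := y - x with hv
  have hcontf' : Continuous f' := by
    rcases eq_or_lt_of_le hL with h0 | h0
    · have : ∀ a b : E, f' a = f' b := by
        intro a b
        have := hlip a b
        rw [← h0, zero_mul] at this
        simpa [sub_eq_zero] using le_antisymm this (norm_nonneg _)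
      exact continuous_const.congr fun a => (this x a)
    · exact (LipschitzWith.of_dist_le_mul (K := ⟨L, hL⟩) (fun a b => by
        rw [dist_eq_norm, dist_eq_norm]; exact hlip a b)).continuous
  have hline : ∀ t : ℝ, HasDerivAt (fun t : ℝ => x + t • v) v t := by
    intro t
    simpa using ((hasDerivAt_id t).smul_const v).const_add x
  have hg : ∀ t : ℝ, HasDerivAt (fun t : ℝ => f (x + t • v)) ⟪f' (x + t • v), v⟫ t := by
    intro t
    have hF := (hdiff (x + t • v)).hasFDerivAt
    have := hF.comp_hasDerivAt t (hline t)
    simp only [Function.comp_def, InnerProductSpace.toDual_apply_apply] at this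
    exact this
  have hcont : Continuous fun t : ℝ => ⟪f' (x + t • v), v⟫ :=
    ((hcontf'.comp (continuous_const.add (continuous_id.smul continuous_const))).inner
      continuous_const)
  have hftc : f y - f x = ∫ t in (0:ℝ)..1, ⟪f' (x + t • v), v⟫ := by
    have := intervalIntegral.integral_eq_sub_of_hasDerivAt (f := fun t : ℝ => f (x + t • v))
      (f' := fun t => ⟪f' (x + t • v), v⟫) (a := 0) (b := 1)
      (fun t _ => hg t) (hcont.intervalIntegrable 0 1)
    simpa [hv] using this.symm
  have hbound : ∀ t ∈ Set.Icc (0:ℝ) 1,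
      ⟪f' (x + t • v), v⟫ ≤ ⟪f' x, v⟫ + L * t * ‖v‖ ^ 2 := by
    intro t ht
    have h1 : ⟪f' (x + t • v) - f' x, v⟫ ≤ ‖f' (x + t • v) - f' x‖ * ‖v‖ :=
      real_inner_le_norm _ _
    have h2 : ‖f' (x + t • v) - f' x‖ ≤ L * (t * ‖v‖) := by
      have := hlip (x + t • v) x
      simpa [abs_of_nonneg ht.1, norm_smul, mul_assoc] using this
    have h3 : ‖f' (x + t • v) - f' x‖ * ‖v‖ ≤ L * (t * ‖v‖) * ‖v‖ :=
      mul_le_mul_of_nonneg_right h2 (norm_nonneg _)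
    have := h1.trans h3
    rw [inner_sub_left] at this
    nlinarith [this]
  have hint : (∫ t in (0:ℝ)..1, ⟪f' (x + t • v), v⟫) ≤
      ∫ t in (0:ℝ)..1, (⟪f' x, v⟫ + L * t * ‖v‖ ^ 2) := by
    apply intervalIntegral.integral_mono_on (by norm_num)
      (hcont.intervalIntegrable 0 1)
      ((continuous_const.add ((continuous_const.mul continuous_id).mul
        continuous_const)).intervalIntegrable 0 1)
    exact hbound
  have hval : (∫ t in (0:ℝ)..1, (⟪f' x, v⟫ + L * t * ‖v‖ ^ 2)) =
      ⟪f' x, v⟫ + L / 2 * ‖v‖ ^ 2 := by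
    have heq : (fun t : ℝ => ⟪f' x, v⟫ + L * t * ‖v‖ ^ 2) =
        fun t : ℝ => ⟪f' x, v⟫ + (L * ‖v‖ ^ 2) * t := by ext t; ring
    rw [heq, intervalIntegral.integral_add intervalIntegrable_const
      (g := fun t : ℝ => L * ‖v‖ ^ 2 * t) ((continuous_const.mul continuous_id').intervalIntegrable 0 1), intervalIntegral.integral_const_mul, integral_id]
    norm_num; ring
  linarith [hftc, hint, hval.le.trans (le_refl _), hval]

/-- The augmented Lagrangian of the FedPCA consensus problem. -/
noncomputable def augLag {E : Type*} [NormedAddCommGroup E] [InnerProductSpace ℝ E]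
    (N : ℕ) (f : Fin N → E → ℝ) (ρ : Fin N → ℝ)
    (U : Fin N → E) (Z : E) (Y : Fin N → E) : ℝ :=
  (∑ i, f i (U i)) + (∑ i, ⟪Y i, U i - Z⟫) + (∑ i, ρ i / 2 * ‖U i - Z‖ ^ 2)

/-- Lower bound for the augmented Lagrangian (proof of Lemma 2): if each
`∇fᵢ` is `Lᵢ`-Lipschitz, `ρᵢ ≥ Lᵢ` with `ρᵢ > 0`, and the dual variables
satisfy `Yᵢ⁺ = -∇fᵢ(Uᵢ⁺)`, then
`𝓛({Uᵢ⁺}, Z⁺, {Yᵢ⁺}) ≥ Σᵢ fᵢ(Z⁺)`. -/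
theorem stmt_6 {E : Type*} [NormedAddCommGroup E] [InnerProductSpace ℝ E] [CompleteSpace E]
    (N : ℕ) (hN : 1 ≤ N)
    (f : Fin N → E → ℝ) (f' : Fin N → E → E)
    (L ρ : Fin N → ℝ) (hρpos : ∀ i, 0 < ρ i) (hρL : ∀ i, L i ≤ ρ i)
    (hdiff : ∀ i x, HasGradientAt (f i) (f' i x) x)
    (hlip : ∀ i x y, ‖f' i x - f' i y‖ ≤ L i * ‖x - y‖)
    (Up : Fin N → E) (Zp : E) (Yp : Fin N → E)
    (hYp : ∀ i, Yp i = -(f' i (Up i))) :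
    (∑ i, f i Zp) ≤ augLag N f ρ Up Zp Yp := by
  unfold augLag
  rw [← Finset.sum_add_distrib, ← Finset.sum_add_distrib]
  apply Finset.sum_le_sum
  intro i _
  rcases eq_or_ne (Up i) Zp with h | h
  · simp [h, hYp i]
  · have hdpos : 0 < ‖Up i - Zp‖ := by
      rwa [norm_pos_iff, sub_ne_zero]
    have hLnn : 0 ≤ L i := by
      by_contra hneg
      push_neg at hneg
      have h1 := (norm_nonneg (f' i (Up i) - f' i Zp)).trans (hlip i (Up i) Zp)
      nlinarith
    have hd := descent_lemma (f i) (f' i) (L i) hLnn (hdiff i) (hlip i) (Up i) Zp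
    have hnorm : ‖Zp - Up i‖ = ‖Up i - Zp‖ := norm_sub_rev _ _
    rw [hnorm] at hd
    have hinner : ⟪Yp i, Up i - Zp⟫ = ⟪f' i (Up i), Zp - Up i⟫ := by
      rw [hYp i, inner_neg_left, ← inner_neg_right, neg_sub]
    have hcoef : L i / 2 * ‖Up i - Zp‖ ^ 2 ≤ ρ i / 2 * ‖Up i - Zp‖ ^ 2 := by
      have := hρL i
      nlinarith [sq_nonneg ‖Up i - Zp‖]
    rw [hinner]
    linarith
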